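/- For any integer n ≥ 2, any reals G_1,…,G_n with 0 < G_i ≤ 1 and any positive reals g_1,…,g_n, the sum over i of g_i / (∑_{k≠i} g_k/G_k) is at least the square root of the product of all G_i. -/

import Mathlib

theorem stmt0 (n : ℕ) (hn : 2 ≤ n) (G g : Fin n → ℝ)
    (hG : ∀ i, 0 < G i ∧ G i ≤ 1) (hg : ∀ i, 0 < g i) :
    ∑ i, g i / (∑ k ∈ Finset.univ.erase i, g k / G k) ≥
      Real.sqrt (∏ i, G i) := by
  have : Nontrivial (Fin n) := Fin.nontrivial_iff_two_le.mpr hn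
  set a : Fin n → ℝ := fun i => g i / G i with ha_def
  set u : Fin n → ℝ := fun i => Real.sqrt (G i) with hu_def
  have hGpos : ∀ i, 0 < G i := fun i => (hG i).1
  have ha : ∀ i, 0 < a i := fun i => div_pos (hg i) (hGpos i)
  have hu : ∀ i, 0 < u i := fun i => Real.sqrt_pos.mpr (hGpos i)
  have hu1 : ∀ i, u i ≤ 1 := fun i => Real.sqrt_le_one.mpr (hG i).2
  set P : Fin n → ℝ := fun i => ∑ k ∈ Finset.univ.erase i, a k with hP_def
  have hP : ∀ i, 0 < P i := by
    intro i
    obtain ⟨j, hj⟩ := exists_ne i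
    exact Finset.sum_pos' (fun k _ => (ha k).le)
      ⟨j, Finset.mem_erase.mpr ⟨hj, Finset.mem_univ j⟩, ha j⟩
  -- the product of all u's is at most u i * u k for i ≠ k
  have hkey : ∀ i k : Fin n, k ≠ i → (∏ j, u j) ≤ u i * u k := by
    intro i k hki
    rw [← Finset.mul_prod_erase _ _ (Finset.mem_univ i),
      ← Finset.mul_prod_erase _ _ (Finset.mem_erase.mpr ⟨hki, Finset.mem_univ k⟩)]
    have h1 : ∏ j ∈ (Finset.univ.erase i).erase k, u j ≤ 1 :=
      Finset.prod_le_one (fun j _ => (hu j).le) (fun j _ => hu1 j)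
    calc u i * (u k * ∏ j ∈ (Finset.univ.erase i).erase k, u j)
        ≤ u i * (u k * 1) := by
          apply mul_le_mul_of_nonneg_left _ (hu i).le
          exact mul_le_mul_of_nonneg_left h1 (hu k).le
      _ = u i * u k := by ring
  have hsqrt : Real.sqrt (∏ i, G i) = ∏ i, u i := by
    have h : ∏ i, G i = (∏ i, u i) ^ 2 := by
      rw [← Finset.prod_pow]
      exact Finset.prod_congr rfl fun i _ => (Real.sq_sqrt (hGpos i).le).symm
    rw [h, Real.sqrt_sq (Finset.prod_nonneg fun i _ => (hu i).le)]
  have hdenpos : (0:ℝ) < ∑ i, a i * P i :=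
    Finset.sum_pos (fun i _ => mul_pos (ha i) (hP i)) Finset.univ_nonempty
  -- Key inequality: (∏ u) * ∑ a i * P i ≤ (∑ u i * a i)^2
  have hmain : (∏ j, u j) * ∑ i, a i * P i ≤ (∑ i, u i * a i) ^ 2 := by
    rw [Finset.mul_sum, sq, Finset.sum_mul_sum]
    apply Finset.sum_le_sum
    intro i _
    calc (∏ j, u j) * (a i * P i)
        = ∑ k ∈ Finset.univ.erase i, (∏ j, u j) * (a i * a k) := by
          rw [hP_def]; rw [Finset.mul_sum, Finset.mul_sum]
      _ ≤ ∑ k ∈ Finset.univ.erase i, (u i * a i) * (u k * a k) := by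
          apply Finset.sum_le_sum
          intro k hk
          have hki : k ≠ i := (Finset.mem_erase.mp hk).1
          have : (∏ j, u j) * (a i * a k) ≤ (u i * u k) * (a i * a k) :=
            mul_le_mul_of_nonneg_right (hkey i k hki)
              (mul_nonneg (ha i).le (ha k).le)
          linarith [this, mul_comm (u i * u k) (a i * a k)]
      _ ≤ ∑ k, (u i * a i) * (u k * a k) := by
          apply Finset.sum_le_sum_of_subset_of_nonneg (Finset.subset_univ _)
          intro k _ _
          exact mul_nonneg (mul_nonneg (hu i).le (ha i).le)
            (mul_nonneg (hu k).le (ha k).le)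
  -- Engel form (Cauchy-Schwarz)
  have hengel : (∑ i, u i * a i) ^ 2 / (∑ i, a i * P i) ≤ ∑ i, g i / P i := by
    have h := Finset.sq_sum_div_le_sum_sq_div Finset.univ (fun i => u i * a i)
      (g := fun i => a i * P i) (fun i _ => mul_pos (ha i) (hP i))
    refine h.trans_eq (Finset.sum_congr rfl fun i _ => ?_)
    have h1 : u i ^ 2 = G i := Real.sq_sqrt (hGpos i).le
    have h2 : G i * a i = g i := by
      show G i * (g i / G i) = g i
      rw [mul_div_assoc'] 
      exact mul_div_cancel_left₀ _ (hGpos i).ne'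
    have hane := (ha i).ne'
    have hPne := (hP i).ne'
    rw [← h2, ← h1]
    field_simp
  have hPden : ∀ i, (∑ k ∈ Finset.univ.erase i, g k / G k) = P i := fun i => rfl
  calc Real.sqrt (∏ i, G i) = ∏ j, u j := hsqrt
    _ ≤ (∑ i, u i * a i) ^ 2 / (∑ i, a i * P i) :=
        (le_div_iff₀ hdenpos).mpr hmain
    _ ≤ ∑ i, g i / P i := hengel
    _ = ∑ i, g i / (∑ k ∈ Finset.univ.erase i, g k / G k) := by
        exact Finset.sum_congr rfl fun i _ => by rw [hPden]
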